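/- For every α > 1, the set D_feas = {(s,r) ∈ ℝ² : r ≥ 0 and α·c_d(s,r) ≤ r²} is a convex subset of ℝ². -/

import Mathlib

open MeasureTheory ProbabilityTheory Filter Real
open scoped ENNReal

noncomputable section

/-- The standard Gaussian measure `N(0,1)` on `ℝ`. -/
def stdGaussian : Measure ℝ := gaussianReal 0 1

instance : IsProbabilityMeasure stdGaussian :=
  inferInstanceAs (IsProbabilityMeasure (gaussianReal 0 1))

/-- `c_d(s,r) = E[(min{|q| - |r g + s q|, 0})²]` for independent standard Gaussians `q, g`. -/
def cd (s r : ℝ) : ℝ :=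
  ∫ p : ℝ × ℝ, (min (|p.1| - |r * p.2 + s * p.1|) 0) ^ 2
    ∂(stdGaussian.prod stdGaussian)

lemma integrable_sq_aux : Integrable (fun x : ℝ => x ^ 2 * Real.exp (-(1/2 : ℝ) * x ^ 2)) := by
  have hI : Integrable (fun x : ℝ => 4 * Real.exp (-(1/4 : ℝ) * x ^ 2)) :=
    (integrable_exp_neg_mul_sq (by norm_num)).const_mul 4
  refine hI.mono' ?_ ?_
  · exact ((continuous_pow 2).mul ((continuous_const.mul (continuous_pow 2)).rexp)).aestronglyMeasurable
  · filter_upwards with x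
    have h1 : x ^ 2 ≤ 4 * Real.exp ((1/4 : ℝ) * x ^ 2) := by
      nlinarith [Real.add_one_le_exp ((1/4 : ℝ) * x ^ 2), Real.exp_pos ((1/4 : ℝ) * x ^ 2)]
    have h2 : (0:ℝ) ≤ x ^ 2 * Real.exp (-(1/2 : ℝ) * x ^ 2) := by positivity
    rw [Real.norm_of_nonneg h2]
    calc x ^ 2 * Real.exp (-(1/2 : ℝ) * x ^ 2)
        ≤ (4 * Real.exp ((1/4 : ℝ) * x ^ 2)) * Real.exp (-(1/2 : ℝ) * x ^ 2) :=
          mul_le_mul_of_nonneg_right h1 (Real.exp_pos _).le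
      _ = 4 * Real.exp (-(1/4 : ℝ) * x ^ 2) := by
          rw [mul_assoc, ← Real.exp_add]; ring_nf

lemma integrable_sq_stdGaussian : Integrable (fun x : ℝ => x ^ 2) stdGaussian := by
  have hlt : ∀ᵐ x : ℝ ∂(volume : Measure ℝ), gaussianPDF 0 1 x < ⊤ :=
    ae_of_all _ fun x => by rw [gaussianPDF_def]; exact ENNReal.ofReal_lt_top
  rw [_root_.stdGaussian, gaussianReal_of_var_ne_zero 0 one_ne_zero,
    integrable_withDensity_iff (measurable_gaussianPDF 0 1) hlt]
  have H := integrable_sq_aux.const_mul ((Real.sqrt (2 * π))⁻¹)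
  refine H.congr (ae_of_all _ fun x => ?_)
  simp only [gaussianPDF, gaussianPDFReal]
  push_cast
  ring_nf
  rw [ENNReal.toReal_ofReal (by positivity)]
  ring

abbrev μ2 : Measure (ℝ × ℝ) := stdGaussian.prod stdGaussian

/-- The positive-part function whose square is the `cd` integrand. -/
def Ffun (s r : ℝ) : ℝ × ℝ → ℝ := fun p => max (|r * p.2 + s * p.1| - |p.1|) 0

lemma Ffun_nonneg (s r : ℝ) (p : ℝ × ℝ) : 0 ≤ Ffun s r p := le_max_right _ _

lemma continuous_Ffun (s r : ℝ) : Continuous (Ffun s r) := by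
  unfold Ffun; fun_prop

lemma memℒp_id_std : MemLp (fun x : ℝ => x) 2 stdGaussian :=
  (memLp_two_iff_integrable_sq aestronglyMeasurable_id).2 integrable_sq_stdGaussian

lemma mp_fst : MemLp (fun p : ℝ × ℝ => p.1) 2 μ2 :=
  memℒp_id_std.comp_measurePreserving ⟨measurable_fst, by simp⟩

lemma mp_snd : MemLp (fun p : ℝ × ℝ => p.2) 2 μ2 :=
  memℒp_id_std.comp_measurePreserving ⟨measurable_snd, by simp⟩

lemma memF (s r : ℝ) : MemLp (Ffun s r) 2 μ2 := by
  have hG : MemLp (fun p : ℝ × ℝ => |r| * |p.2| + |s| * |p.1|) 2 μ2 := by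
    have h1 := mp_snd.norm.const_mul (μ := μ2) |r|
    have h2 := mp_fst.norm.const_mul (μ := μ2) |s|
    simpa [Real.norm_eq_abs, Pi.add_def] using h1.add h2
  refine hG.of_le (continuous_Ffun s r).aestronglyMeasurable (ae_of_all _ fun p => ?_)
  rw [Real.norm_of_nonneg (Ffun_nonneg s r p), Real.norm_of_nonneg (by positivity)]
  refine max_le ?_ (by positivity)
  calc |r * p.2 + s * p.1| - |p.1| ≤ |r * p.2 + s * p.1| := sub_le_self _ (abs_nonneg _)
    _ ≤ |r * p.2| + |s * p.1| := abs_add_le _ _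
    _ = |r| * |p.2| + |s| * |p.1| := by rw [abs_mul, abs_mul]

lemma sq_eLpNorm {f : ℝ × ℝ → ℝ} (hf : MemLp f 2 μ2) (hpos : ∀ p, 0 ≤ f p) :
    ∫ p, f p ^ 2 ∂μ2 = ((eLpNorm f 2 μ2).toReal) ^ 2 := by
  rw [hf.eLpNorm_eq_integral_rpow_norm two_ne_zero ENNReal.ofNat_ne_top]
  have h2 : (2 : ℝ≥0∞).toReal = (2 : ℝ) := by simp
  rw [h2]
  have hI : ∫ p, ‖f p‖ ^ (2:ℝ) ∂μ2 = ∫ p, f p ^ 2 ∂μ2 := by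
    refine integral_congr_ae (ae_of_all _ fun p => ?_)
    dsimp only
    rw [Real.rpow_two, Real.norm_eq_abs, sq_abs]
  rw [hI, ENNReal.toReal_ofReal (by positivity)]
  have hnn : 0 ≤ ∫ p, f p ^ 2 ∂μ2 := integral_nonneg fun p => sq_nonneg _
  rw [← Real.rpow_natCast ((∫ p, f p ^ 2 ∂μ2) ^ (2:ℝ)⁻¹) 2, ← Real.rpow_mul hnn]
  norm_num

lemma cd_eq (s r : ℝ) : cd s r = ((eLpNorm (Ffun s r) 2 μ2).toReal) ^ 2 := by
  rw [← sq_eLpNorm (memF s r) (Ffun_nonneg s r)]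
  refine integral_congr_ae (ae_of_all _ fun p => ?_)
  unfold Ffun
  dsimp only
  rcases le_total (|p.1| - |r * p.2 + s * p.1|) 0 with h | h
  · rw [min_eq_left h, max_eq_left (by linarith)]; ring
  · rw [min_eq_right h, max_eq_right (by linarith)]

lemma F_convex (s1 r1 s2 r2 a b : ℝ) (ha : 0 ≤ a) (hb : 0 ≤ b) (hab : a + b = 1)
    (p : ℝ × ℝ) :
    Ffun (a * s1 + b * s2) (a * r1 + b * r2) p
      ≤ a * Ffun s1 r1 p + b * Ffun s2 r2 p := by
  unfold Ffun
  refine max_le ?_ (by positivity)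
  have h1 : |(a * r1 + b * r2) * p.2 + (a * s1 + b * s2) * p.1|
      ≤ a * |r1 * p.2 + s1 * p.1| + b * |r2 * p.2 + s2 * p.1| := by
    calc |(a * r1 + b * r2) * p.2 + (a * s1 + b * s2) * p.1|
        = |a * (r1 * p.2 + s1 * p.1) + b * (r2 * p.2 + s2 * p.1)| := by ring_nf
      _ ≤ |a * (r1 * p.2 + s1 * p.1)| + |b * (r2 * p.2 + s2 * p.1)| := abs_add_le _ _
      _ = a * |r1 * p.2 + s1 * p.1| + b * |r2 * p.2 + s2 * p.1| := by
          rw [abs_mul, abs_mul, abs_of_nonneg ha, abs_of_nonneg hb]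
  have hc : a * |p.1| + b * |p.1| = |p.1| := by rw [← add_mul, hab, one_mul]
  have h2 : |(a * r1 + b * r2) * p.2 + (a * s1 + b * s2) * p.1| - |p.1|
      ≤ a * (|r1 * p.2 + s1 * p.1| - |p.1|) + b * (|r2 * p.2 + s2 * p.1| - |p.1|) := by
    have := h1; nlinarith [hc]
  refine h2.trans ?_
  have g1 : a * (|r1 * p.2 + s1 * p.1| - |p.1|) ≤ a * max (|r1 * p.2 + s1 * p.1| - |p.1|) 0 :=
    mul_le_mul_of_nonneg_left (le_max_left _ _) ha
  have g2 : b * (|r2 * p.2 + s2 * p.1| - |p.1|) ≤ b * max (|r2 * p.2 + s2 * p.1| - |p.1|) 0 :=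
    mul_le_mul_of_nonneg_left (le_max_left _ _) hb
  linarith

theorem stmt1 (α : ℝ) (hα : 1 < α) :
    Convex ℝ {p : ℝ × ℝ | 0 ≤ p.2 ∧ α * cd p.1 p.2 ≤ p.2 ^ 2} := by
  rintro ⟨s1, r1⟩ ⟨hr1, h1⟩ ⟨s2, r2⟩ ⟨hr2, h2⟩ a b ha hb hab
  simp only [Set.mem_setOf_eq, Prod.smul_mk, Prod.mk_add_mk, smul_eq_mul] at *
  have hr : 0 ≤ a * r1 + b * r2 := add_nonneg (mul_nonneg ha hr1) (mul_nonneg hb hr2)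
  refine ⟨hr, ?_⟩
  set s := a * s1 + b * s2
  set r := a * r1 + b * r2
  set ψ := fun s r : ℝ => (eLpNorm (Ffun s r) 2 μ2).toReal with hψdef
  have hψnn : ∀ s r : ℝ, 0 ≤ ψ s r := fun s r => ENNReal.toReal_nonneg
  -- Minkowski step
  have hchain : eLpNorm (Ffun s r) 2 μ2
      ≤ (‖a‖₊ : ℝ≥0∞) * eLpNorm (Ffun s1 r1) 2 μ2
        + (‖b‖₊ : ℝ≥0∞) * eLpNorm (Ffun s2 r2) 2 μ2 := by
    calc eLpNorm (Ffun s r) 2 μ2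
        ≤ eLpNorm (a • Ffun s1 r1 + b • Ffun s2 r2) 2 μ2 := by
          refine eLpNorm_mono fun p => ?_
          rw [Real.norm_of_nonneg (Ffun_nonneg _ _ p)]
          have hle := F_convex s1 r1 s2 r2 a b ha hb hab p
          have hnn : (0:ℝ) ≤ a * Ffun s1 r1 p + b * Ffun s2 r2 p := by
            have := Ffun_nonneg s1 r1 p; have := Ffun_nonneg s2 r2 p; positivity
          simpa [Real.norm_eq_abs, abs_of_nonneg hnn] using hle
      _ ≤ eLpNorm (a • Ffun s1 r1) 2 μ2 + eLpNorm (b • Ffun s2 r2) 2 μ2 :=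
          eLpNorm_add_le ((continuous_Ffun s1 r1).aestronglyMeasurable.const_smul a)
            ((continuous_Ffun s2 r2).aestronglyMeasurable.const_smul b) one_le_two
      _ = (‖a‖₊ : ℝ≥0∞) * eLpNorm (Ffun s1 r1) 2 μ2
            + (‖b‖₊ : ℝ≥0∞) * eLpNorm (Ffun s2 r2) 2 μ2 := by
          rw [eLpNorm_const_smul, eLpNorm_const_smul, enorm_eq_nnnorm, enorm_eq_nnnorm]
  have hfin1 : eLpNorm (Ffun s1 r1) 2 μ2 ≠ ⊤ := (memF s1 r1).2.ne
  have hfin2 : eLpNorm (Ffun s2 r2) 2 μ2 ≠ ⊤ := (memF s2 r2).2.ne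
  have hψle : ψ s r ≤ a * ψ s1 r1 + b * ψ s2 r2 := by
    have hRfin : (‖a‖₊ : ℝ≥0∞) * eLpNorm (Ffun s1 r1) 2 μ2
        + (‖b‖₊ : ℝ≥0∞) * eLpNorm (Ffun s2 r2) 2 μ2 ≠ ⊤ := by
      simp [ENNReal.add_ne_top, ENNReal.mul_ne_top, hfin1, hfin2]
    have := ENNReal.toReal_mono hRfin hchain
    rwa [ENNReal.toReal_add (by simp [ENNReal.mul_ne_top, hfin1]) (by simp [ENNReal.mul_ne_top, hfin2]),
      ENNReal.toReal_mul, ENNReal.toReal_mul, ENNReal.coe_toReal, ENNReal.coe_toReal,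
      coe_nnnorm, coe_nnnorm, Real.norm_of_nonneg ha, Real.norm_of_nonneg hb] at this
  -- from the constraints
  have hα0 : (0:ℝ) ≤ α := le_of_lt (lt_trans one_pos hα)
  have key : ∀ s' r' : ℝ, 0 ≤ r' → α * cd s' r' ≤ r' ^ 2 → Real.sqrt α * ψ s' r' ≤ r' := by
    intro s' r' hr' hcon
    have h' : α * (ψ s' r') ^ 2 ≤ r' ^ 2 := by rwa [cd_eq] at hcon
    have := Real.sqrt_le_sqrt h'
    rwa [Real.sqrt_mul hα0, Real.sqrt_sq (hψnn s' r'), Real.sqrt_sq hr'] at this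
  have k1 := key s1 r1 hr1 h1
  have k2 := key s2 r2 hr2 h2
  have hfinal : Real.sqrt α * ψ s r ≤ r := by
    calc Real.sqrt α * ψ s r ≤ Real.sqrt α * (a * ψ s1 r1 + b * ψ s2 r2) :=
          mul_le_mul_of_nonneg_left hψle (Real.sqrt_nonneg α)
      _ = a * (Real.sqrt α * ψ s1 r1) + b * (Real.sqrt α * ψ s2 r2) := by ring
      _ ≤ a * r1 + b * r2 := by
          have g1 := mul_le_mul_of_nonneg_left k1 ha
          have g2 := mul_le_mul_of_nonneg_left k2 hb
          linarith
  have : (Real.sqrt α * ψ s r) ^ 2 ≤ r ^ 2 :=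
    pow_le_pow_left₀ (by positivity) hfinal 2
  rwa [mul_pow, Real.sq_sqrt hα0, ← cd_eq] at this
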